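/- Let P be a finite path graph with vertices v₁, …, vₙ (n ≥ 2), and let L be a list assignment such that the two endpoint vertices v₁ and vₙ have lists of size at least 1, some internal vertex v_k (1 < k < n) has a list of size at least 3, and every other internal vertex has a list of size at least 2. Then P has a proper L-coloring. -/
import Mathlib

open Classical in
/-- Pick some element of `s` if nonempty, else an arbitrary element. -/
noncomputable def pickC {α : Type*} (s : Finset α) [Nonempty α] : α :=
  if h : s.Nonempty then h.choose else Classical.arbitrary α

lemma pickC_mem {α : Type*} (s : Finset α) [Nonempty α] (h : s.Nonempty) : pickC s ∈ s := by
  rw [pickC, dif_pos h]; exact h.choose_spec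

set_option maxHeartbeats 1000000 in
/-- A path `v₁ … vₙ` (`n ≥ 2`) whose endpoints have lists of size ≥ 1, some
internal vertex has a list of size ≥ 3, and all other internal vertices have
lists of size ≥ 2, admits a proper coloring from the lists. -/
theorem stmt_3 {α : Type*} [DecidableEq α] (n : ℕ) (hn : 2 ≤ n)
    (L : Fin n → Finset α) (k : Fin n) (hk0 : 0 < (k : ℕ)) (hkn : (k : ℕ) < n - 1)
    (hend1 : 1 ≤ (L ⟨0, by omega⟩).card)
    (hend2 : 1 ≤ (L ⟨n - 1, by omega⟩).card)
    (hk : 3 ≤ (L k).card)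
    (hint : ∀ i : Fin n, 0 < (i : ℕ) → (i : ℕ) < n - 1 → i ≠ k → 2 ≤ (L i).card) :
    ∃ φ : Fin n → α, (∀ v, φ v ∈ L v) ∧
      ∀ u v, (SimpleGraph.pathGraph n).Adj u v → φ u ≠ φ v := by
  have hn0 : 0 < n := by omega
  obtain ⟨a0, ha0⟩ := Finset.card_pos.mp (by omega : 0 < (L ⟨0, by omega⟩).card)
  haveI : Nonempty α := ⟨a0⟩
  -- nonemptiness of a list minus one forbidden color, for internal vertices ≠ k
  have hcard2 : ∀ (v : Fin n), 0 < (v : ℕ) → (v : ℕ) < n - 1 → v ≠ k → ∀ x : α,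
      ((L v) \ {x}).Nonempty := by
    intro v h1 h2 h3 x
    have h4 : 2 ≤ (L v).card := hint v h1 h2 h3
    obtain ⟨b, hb, hbx⟩ := Finset.exists_mem_ne (s := L v) (by omega) x
    exact ⟨b, Finset.mem_sdiff.mpr ⟨hb, by simp [hbx]⟩⟩
  -- nonemptiness of k's list minus two forbidden colors
  have hcardk : ∀ x y : α, ((L k) \ {x, y}).Nonempty := by
    intro x y
    have h1 : (L k).card ≤ ((L k) \ {x, y}).card + ({x, y} : Finset α).card :=
      Finset.card_le_card_sdiff_add_card
    have h2 : ({x, y} : Finset α).card ≤ 2 := Finset.card_insert_le _ _ |>.trans (by simp)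
    exact Finset.card_pos.mp (by omega)
  -- left greedy coloring: g i colors vertex i, for i ≤ k-1
  set g : ℕ → α := fun i => Nat.rec (pickC (L ⟨0, by omega⟩))
    (fun i prev => pickC ((L ⟨(i + 1) % n, Nat.mod_lt _ hn0⟩) \ {prev})) i with hg
  have hg0 : g 0 ∈ L ⟨0, by omega⟩ := pickC_mem _ ⟨a0, ha0⟩
  have hgs : ∀ i : ℕ, (hi : i + 1 < (k : ℕ)) →
      g (i + 1) ∈ (L ⟨i + 1, by omega⟩) \ {g i} := by
    intro i hi
    have heq : (⟨(i + 1) % n, Nat.mod_lt _ hn0⟩ : Fin n) = ⟨i + 1, by omega⟩ :=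
      Fin.ext (Nat.mod_eq_of_lt (by omega))
    have hne : ((L ⟨(i + 1) % n, Nat.mod_lt _ hn0⟩) \ {g i}).Nonempty := by
      rw [heq]
      exact hcard2 ⟨i + 1, by omega⟩ (Nat.succ_pos i) (by show i + 1 < n - 1; omega)
        (Fin.ne_of_val_ne (by show i + 1 ≠ (k : ℕ); omega)) _
    rw [← heq]
    exact pickC_mem _ hne
  have hgmem : ∀ i : ℕ, (hi : i < (k : ℕ)) → g i ∈ L ⟨i, by omega⟩ := by
    intro i hi
    cases i with
    | zero => exact hg0
    | succ j => exact (Finset.mem_sdiff.mp (hgs j hi)).1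
  -- right greedy coloring: h j colors vertex n-1-j, for j ≤ n-2-k
  set h : ℕ → α := fun j => Nat.rec (pickC (L ⟨n - 1, by omega⟩))
    (fun j prev => pickC ((L ⟨(n - 2 - j) % n, Nat.mod_lt _ hn0⟩) \ {prev})) j with hh
  have hh0 : h 0 ∈ L ⟨n - 1, by omega⟩ :=
    pickC_mem _ (Finset.card_pos.mp (by omega))
  have hhs : ∀ j : ℕ, (hj : j + 1 ≤ n - 2 - (k : ℕ)) →
      h (j + 1) ∈ (L ⟨n - 2 - j, by omega⟩) \ {h j} := by
    intro j hj
    have hlt : n - 2 - j < n := by omega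
    have heq : (⟨(n - 2 - j) % n, Nat.mod_lt _ hn0⟩ : Fin n) = ⟨n - 2 - j, by omega⟩ :=
      Fin.ext (Nat.mod_eq_of_lt hlt)
    have hne : ((L ⟨(n - 2 - j) % n, Nat.mod_lt _ hn0⟩) \ {h j}).Nonempty := by
      rw [heq]
      exact hcard2 ⟨n - 2 - j, by omega⟩ (by show 0 < n - 2 - j; omega)
        (by show n - 2 - j < n - 1; omega)
        (Fin.ne_of_val_ne (by show n - 2 - j ≠ (k : ℕ); omega)) _
    rw [← heq]
    exact pickC_mem _ hne
  have hhmem : ∀ j : ℕ, (hj : j ≤ n - 2 - (k : ℕ)) → h j ∈ L ⟨n - 1 - j, by omega⟩ := by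
    intro j hj
    cases j with
    | zero => exact hh0
    | succ m =>
      have := (Finset.mem_sdiff.mp (hhs m hj)).1
      have heq : (⟨n - 2 - m, by omega⟩ : Fin n) = ⟨n - 1 - (m + 1), by omega⟩ :=
        Fin.ext (by show n - 2 - m = n - 1 - (m + 1); omega)
      rwa [heq] at this
  -- the color at k
  set ck : α := pickC ((L k) \ {g ((k : ℕ) - 1), h (n - 2 - (k : ℕ))}) with hck
  have hckmem : ck ∈ (L k) \ {g ((k : ℕ) - 1), h (n - 2 - (k : ℕ))} :=
    pickC_mem _ (hcardk _ _)
  -- the full coloring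
  refine ⟨fun v => if (v : ℕ) < (k : ℕ) then g v else
    if (v : ℕ) = (k : ℕ) then ck else h (n - 1 - (v : ℕ)), ?_, ?_⟩
  · intro v
    dsimp only
    by_cases h1 : (v : ℕ) < (k : ℕ)
    · rw [if_pos h1]
      have hm := hgmem v h1
      have he : (⟨(v : ℕ), by omega⟩ : Fin n) = v := Fin.ext rfl
      rwa [he] at hm
    · by_cases h2 : (v : ℕ) = (k : ℕ)
      · rw [if_neg h1, if_pos h2]
        have hvk : v = k := Fin.ext h2
        rw [hvk]
        exact (Finset.mem_sdiff.mp hckmem).1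
      · rw [if_neg h1, if_neg h2]
        have hle : n - 1 - (v : ℕ) ≤ n - 2 - (k : ℕ) := by omega
        have hm := hhmem _ hle
        have he : (⟨n - 1 - (n - 1 - (v : ℕ)), by omega⟩ : Fin n) = v :=
          Fin.ext (by show n - 1 - (n - 1 - (v : ℕ)) = (v : ℕ); omega)
        rwa [he] at hm
  · -- properness
    have hckne : ck ≠ g ((k : ℕ) - 1) ∧ ck ≠ h (n - 2 - (k : ℕ)) := by
      have := (Finset.mem_sdiff.mp hckmem).2
      simp only [Finset.mem_insert, Finset.mem_singleton] at this
      push_neg at this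
      exact this
    have key : ∀ u v : Fin n, (u : ℕ) + 1 = (v : ℕ) →
        (if (u : ℕ) < (k : ℕ) then g u else if (u : ℕ) = (k : ℕ) then ck else h (n - 1 - (u : ℕ)))
        ≠ (if (v : ℕ) < (k : ℕ) then g v else
           if (v : ℕ) = (k : ℕ) then ck else h (n - 1 - (v : ℕ))) := by
      intro u v huv
      rcases lt_trichotomy ((v : ℕ)) (k : ℕ) with h1 | h1 | h1
      · -- both left of k
        have hu : (u : ℕ) < (k : ℕ) := by omega
        rw [if_pos hu, if_pos h1]
        have hne := (Finset.mem_sdiff.mp (hgs u (by omega))).2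
        rw [huv] at hne
        simp only [Finset.mem_singleton] at hne
        exact fun hc => hne hc.symm
      · -- v = k
        have hu : (u : ℕ) < (k : ℕ) := by omega
        rw [if_pos hu, if_neg (by omega : ¬ ((v : ℕ) < (k : ℕ))), if_pos h1]
        have h2 : (u : ℕ) = (k : ℕ) - 1 := by omega
        rw [h2]
        exact fun hc => hckne.1 hc.symm
      · -- v > k
        by_cases h2 : (u : ℕ) = (k : ℕ)
        · -- u = k
          rw [if_neg (by omega : ¬ ((u : ℕ) < (k : ℕ))), if_pos h2,
            if_neg (by omega : ¬ ((v : ℕ) < (k : ℕ))), if_neg (by omega : ¬ ((v : ℕ) = (k : ℕ)))]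
          have h3 : n - 1 - (v : ℕ) = n - 2 - (k : ℕ) := by omega
          rw [h3]
          exact hckne.2
        · -- u > k
          rw [if_neg (by omega : ¬ ((u : ℕ) < (k : ℕ))), if_neg h2,
            if_neg (by omega : ¬ ((v : ℕ) < (k : ℕ))), if_neg (by omega : ¬ ((v : ℕ) = (k : ℕ)))]
          have hj : (n - 1 - (v : ℕ)) + 1 ≤ n - 2 - (k : ℕ) := by omega
          have hne := (Finset.mem_sdiff.mp (hhs _ hj)).2
          simp only [Finset.mem_singleton] at hne
          have h3 : (n - 1 - (v : ℕ)) + 1 = n - 1 - (u : ℕ) := by omega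
          rw [h3] at hne
          exact hne
    intro u v hadj
    dsimp only
    rcases (SimpleGraph.pathGraph_adj.mp hadj) with h1 | h1
    · exact key u v h1
    · exact fun hc => key v u h1 hc.symm
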